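/- Let b, d be real numbers with 0 ≤ b < d/2, let A₀ be the 2×2 real diagonal matrix diag(-d, d), A₁ = 0 (on ℂ), and B the 2×1 matrix (0, b)ᵀ. Then the 1×2 matrix K = (0, -κ) with κ = b/(d/2 + √(d²/4 - b²)) satisfies the Riccati equation K A₀ - A₁ K + K B K = -B*, and moreover ‖K‖ = ‖B‖ / dist(spec(A₀+BK), spec(A₁)). -/

import Mathlib

open Matrix
open scoped Matrix.Norms.L2Operator

/-- Distance between two sets of complex numbers. -/
noncomputable def specDist (S T : Set ℂ) : ℝ := sInf (Set.image2 dist S T)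

/-- The L2 operator norm of a 1×1 complex matrix is the norm of its entry. -/
lemma norm_single' (z : ℂ) : ‖(!![z] : Matrix (Fin 1) (Fin 1) ℂ)‖ = ‖z‖ := by
  have h : (!![z] : Matrix (Fin 1) (Fin 1) ℂ) = z • 1 := by
    ext i j; fin_cases i; fin_cases j; simp
  rw [h, norm_smul, CStarRing.norm_one, mul_one]

lemma eq_of_mul_self (x y : ℝ) (hx : 0 ≤ x) (hy : 0 ≤ y) (h : x * x = y ^ 2) : x = y := by
  nlinarith

theorem stmt9 (b d : ℝ) (hb : 0 ≤ b) (hbd : b < d / 2)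
    (A₀ : Matrix (Fin 2) (Fin 2) ℂ) (hA₀ : A₀ = !![-(d : ℂ), 0; 0, (d : ℂ)])
    (A₁ : Matrix (Fin 1) (Fin 1) ℂ) (hA₁ : A₁ = 0)
    (B : Matrix (Fin 2) (Fin 1) ℂ) (hB : B = !![(0 : ℂ); (b : ℂ)])
    (κ : ℝ) (hκ : κ = b / (d / 2 + Real.sqrt (d ^ 2 / 4 - b ^ 2)))
    (K : Matrix (Fin 1) (Fin 2) ℂ) (hK : K = !![(0 : ℂ), -(κ : ℂ)]) :
    K * A₀ - A₁ * K + K * B * K = -Bᴴ ∧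
      ‖K‖ = ‖B‖ / specDist (spectrum ℂ (A₀ + B * K)) (spectrum ℂ A₁) := by
  set s : ℝ := Real.sqrt (d ^ 2 / 4 - b ^ 2) with hs
  have hd : 0 < d := by linarith
  have hs0 : 0 ≤ s := Real.sqrt_nonneg _
  have hssq : s ^ 2 = d ^ 2 / 4 - b ^ 2 := Real.sq_sqrt (by nlinarith)
  clear_value s
  set r : ℝ := d / 2 + s with hr
  clear_value r
  have hr0 : 0 < r := by rw [hr]; positivity
  have hrle : r ≤ d := by
    have hsd : s ≤ d / 2 := by nlinarith
    linarith
  have hid : r ^ 2 = d * r - b ^ 2 := by rw [hr]; linear_combination hssq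
  have hκ0 : 0 ≤ κ := hκ ▸ div_nonneg hb hr0.le
  have hkey : κ * d - κ ^ 2 * b = b := by
    rw [hκ]; field_simp; linear_combination (-b) * hid
  have hdr : d - b * κ = r := by
    rw [hκ]; field_simp; linear_combination -hid
  -- part 1
  have part1 : K * A₀ - A₁ * K + K * B * K = -Bᴴ := by
    have hc : (κ : ℂ) * d - κ ^ 2 * b = b := by exact_mod_cast congrArg Complex.ofReal hkey
    subst hA₀ hA₁ hB hK
    ext i j
    fin_cases i <;> fin_cases j <;>
      simp [Matrix.mul_apply, Fin.sum_univ_succ]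
    linear_combination -hc
  refine ⟨part1, ?_⟩
  -- the closed-loop matrix is diagonal
  have hdiag : A₀ + B * K = Matrix.diagonal ![(-d : ℂ), (r : ℂ)] := by
    have hc : (d : ℂ) - b * κ = r := by exact_mod_cast congrArg Complex.ofReal hdr
    subst hA₀ hB hK
    ext i j
    fin_cases i <;> fin_cases j <;>
      simp [Matrix.mul_apply, Fin.sum_univ_succ, Matrix.diagonal_apply]
    linear_combination hc
  have hspec1 : spectrum ℂ (A₀ + B * K) = {(-d : ℂ), (r : ℂ)} := by
    rw [hdiag, spectrum_diagonal]
    ext z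
    simp [Fin.exists_fin_two, eq_comm]
    tauto
  have hspec2 : spectrum ℂ A₁ = {(0 : ℂ)} := by
    have h : A₁ = Matrix.diagonal ![(0 : ℂ)] := by
      subst hA₁; ext i j; fin_cases i; fin_cases j; simp
    rw [h, spectrum_diagonal]
    ext z
    simp [eq_comm, Fin.exists_fin_one]
  have hsd : specDist (spectrum ℂ (A₀ + B * K)) (spectrum ℂ A₁) = r := by
    rw [hspec1, hspec2, specDist, Set.image2_singleton_right, Set.image_pair]
    have h1 : dist (-(d : ℝ) : ℂ) 0 = d := by
      rw [dist_zero_right]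
      simpa using abs_of_pos hd
    have h2 : dist ((r : ℝ) : ℂ) 0 = r := by
      rw [dist_zero_right]
      simpa using abs_of_pos hr0
    rw [h1, h2, csInf_pair]
    exact min_eq_right hrle
  have hnK : ‖K‖ = κ := by
    have h1 : K * Kᴴ = !![((κ ^ 2 : ℝ) : ℂ)] := by
      subst hK; ext i j; fin_cases i; fin_cases j
      simp [Matrix.mul_apply, Fin.sum_univ_succ]
      ring
    have h2 : ‖Kᴴᴴ * Kᴴ‖ = ‖Kᴴ‖ * ‖Kᴴ‖ := Matrix.l2_opNorm_conjTranspose_mul_self Kᴴ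
    rw [Matrix.conjTranspose_conjTranspose, Matrix.l2_opNorm_conjTranspose, h1,
      norm_single'] at h2
    have h3 : ‖((κ ^ 2 : ℝ) : ℂ)‖ = κ ^ 2 := by
      rw [Complex.norm_real]; exact abs_of_nonneg (by positivity)
    rw [h3] at h2
    exact eq_of_mul_self _ _ (norm_nonneg K) hκ0 h2.symm
  have hnB : ‖B‖ = b := by
    have h1 : Bᴴ * B = !![((b ^ 2 : ℝ) : ℂ)] := by
      subst hB; ext i j; fin_cases i; fin_cases j
      simp [Matrix.mul_apply, Fin.sum_univ_succ]
      ring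
    have h2 := Matrix.l2_opNorm_conjTranspose_mul_self B
    rw [h1, norm_single'] at h2
    have h3 : ‖((b ^ 2 : ℝ) : ℂ)‖ = b ^ 2 := by
      rw [Complex.norm_real]; exact abs_of_nonneg (by positivity)
    rw [h3] at h2
    exact eq_of_mul_self _ _ (norm_nonneg B) hb h2.symm
  rw [hnK, hnB, hsd, hκ, hr]
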